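/- Let k be a perfect field of characteristic p > 0, A a finite-dimensional associative unital k-algebra, and v ∈ A a nonzero element. Then at least one of the following holds: (a) there exists a nonzero element w in the k-subalgebra generated by v with w^p = 0; or (b) there exist n ≥ 1 and a₀, a₁, …, a_{n−1} ∈ k with a₀ ≠ 0 such that v^{p^n} + a_{n−1} v^{p^{n−1}} + ⋯ + a₁ v^p + a₀ v = 0 (a monic p-polynomial relation with nonzero linear coefficient, which is in particular a separable polynomial relation). -/

import Mathlib

open Polynomial in
/-- Dichotomy from the proof of Jacobson's lemma: over a perfect field `k` of
characteristic `p > 0`, a nonzero element `v` of a finite-dimensional associative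
unital `k`-algebra either generates a subalgebra containing a nonzero `w` with
`w ^ p = 0`, or satisfies a monic `p`-polynomial relation with nonzero linear
coefficient (hence a separable polynomial relation). -/
theorem stmt_10 {k : Type*} [Field k] (p : ℕ) [Fact p.Prime] [CharP k p]
    [PerfectField k] {A : Type*} [Ring A] [Algebra k A] [FiniteDimensional k A]
    (v : A) (hv : v ≠ 0) :
    (∃ w ∈ Algebra.adjoin k {v}, w ≠ 0 ∧ w ^ p = 0) ∨
    (∃ n : ℕ, 1 ≤ n ∧ ∃ a : ℕ → k, a 0 ≠ 0 ∧
      v ^ p ^ n + ∑ i ∈ Finset.range n, a i • v ^ p ^ i = 0) := by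
  classical
  -- P n : there is a monic p-polynomial relation of degree n
  set P : ℕ → Prop := fun n => ∃ a : ℕ → k,
      v ^ p ^ n + ∑ i ∈ Finset.range n, a i • v ^ p ^ i = 0 with hP
  -- Step 1: existence of some monic relation
  have hex : ∃ n, P n := by
    have hdep : ¬ LinearIndependent k (fun i : ℕ => v ^ p ^ i) :=
      Module.Finite.not_linearIndependent_of_infinite _
    obtain ⟨s, g, hsum, i₀, hi₀s, hi₀⟩ := not_linearIndependent_iff.mp hdep
    set t := s.filter (fun i => g i ≠ 0) with ht
    have htne : t.Nonempty := ⟨i₀, Finset.mem_filter.mpr ⟨hi₀s, hi₀⟩⟩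
    set n := t.max' htne with hn
    have hgn : g n ≠ 0 := (Finset.mem_filter.mp (t.max'_mem htne)).2
    have hsum' : ∑ i ∈ t, g i • v ^ p ^ i = 0 := by
      rw [← hsum]
      refine Finset.sum_subset (Finset.filter_subset _ _) ?_
      intro i his hit
      have hgi : g i = 0 := by
        by_contra h
        exact hit (Finset.mem_filter.mpr ⟨his, h⟩)
      rw [hgi, zero_smul]
    refine ⟨n, fun i => if i ∈ t.erase n then g i / g n else 0, ?_⟩
    have herase : ∑ i ∈ Finset.range n, (if i ∈ t.erase n then g i / g n else 0) • v ^ p ^ i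
        = ∑ i ∈ t.erase n, (g i / g n) • v ^ p ^ i := by
      simp only [ite_smul, zero_smul]
      rw [Finset.sum_ite_mem]
      congr 1
      rw [Finset.inter_comm]
      refine (Finset.inter_eq_left.mpr ?_)
      intro i hi
      rw [Finset.mem_range]
      rcases lt_or_eq_of_le (t.le_max' i (Finset.mem_of_mem_erase hi)) with h | h
      · exact h
      · exact absurd h (Finset.ne_of_mem_erase hi)
    rw [herase]
    have : v ^ p ^ n + ∑ i ∈ t.erase n, (g i / g n) • v ^ p ^ i
        = (g n)⁻¹ • ∑ i ∈ t, g i • v ^ p ^ i := by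
      rw [← Finset.add_sum_erase _ _ (t.max'_mem htne), smul_add, smul_smul,
        inv_mul_cancel₀ hgn, one_smul, Finset.smul_sum]
      congr 1
      refine Finset.sum_congr rfl fun i _ => ?_
      rw [smul_smul, div_eq_inv_mul]
    rw [this, hsum', smul_zero]
  -- Minimal monic relation
  set n₀ := Nat.find hex with hn₀
  obtain ⟨a, ha⟩ : P n₀ := Nat.find_spec hex
  have hn₀pos : 1 ≤ n₀ := by
    rcases Nat.eq_zero_or_pos n₀ with h | h
    · exfalso
      rw [h] at ha
      simp only [pow_zero, pow_one, Finset.range_zero, Finset.sum_empty, add_zero] at ha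
      exact hv ha
    · exact h
  by_cases ha0 : a 0 ≠ 0
  · exact Or.inr ⟨n₀, hn₀pos, a, ha0, ha⟩
  push_neg at ha0
  -- Case: linear coefficient zero; extract a p-nilpotent.
  left
  set c : ℕ → k := fun i => if i = n₀ then 1 else if i < n₀ then a i else 0 with hc
  have hca : ∀ i, i < n₀ → c i = a i := fun i hi => by
    simp only [hc]
    rw [if_neg (Nat.ne_of_lt hi), if_pos hi]
  have hcn₀ : c n₀ ≠ 0 := by simp [hc]
  have hcex : ∃ i, c i ≠ 0 := ⟨n₀, hcn₀⟩
  set m := Nat.find hcex with hm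
  have hmn₀ : m ≤ n₀ := Nat.find_le hcn₀
  have hmpos : 1 ≤ m := by
    rcases Nat.eq_zero_or_pos m with h | h
    · exfalso
      have hspec := Nat.find_spec hcex
      rw [← hm, h] at hspec
      rw [hca 0 (by omega), ha0] at hspec
      exact hspec rfl
    · exact h
  have hclt : ∀ i < m, c i = 0 := fun i hi => by
    have := Nat.find_min hcex hi
    push_neg at this; exact this
  -- Frobenius preimages of the coefficients
  set b : ℕ → k := fun i => (iterateFrobeniusEquiv k p m).symm (c i) with hb
  have hbpow : ∀ i, b i ^ p ^ m = c i := fun i => by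
    have := (iterateFrobeniusEquiv k p m).apply_symm_apply (c i)
    rwa [iterateFrobeniusEquiv_def] at this
  -- the polynomial whose p^m-th power is the relation
  set g : k[X] := ∑ j ∈ Finset.range (n₀ - m + 1), C (b (j + m)) * X ^ p ^ j with hg
  have hgpow : g ^ p ^ m
      = ∑ j ∈ Finset.range (n₀ - m + 1), C (c (j + m)) * X ^ p ^ (j + m) := by
    rw [hg, sum_pow_char_pow]
    refine Finset.sum_congr rfl fun j _ => ?_
    rw [mul_pow, ← C_pow, hbpow, ← pow_mul, ← pow_add]
  set w' : A := aeval v g with hw'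
  have hw'mem : w' ∈ Algebra.adjoin k {v} := by
    rw [Algebra.adjoin_singleton_eq_range_aeval]
    exact ⟨g, rfl⟩
  -- w' ^ p ^ m = 0
  have haeval : ∀ (q : ℕ → k) (s : Finset ℕ),
      aeval v (∑ j ∈ s, C (q j) * X ^ p ^ j) = ∑ j ∈ s, q j • v ^ p ^ j := by
    intro q s
    rw [map_sum]
    refine Finset.sum_congr rfl fun j _ => ?_
    rw [map_mul, aeval_C, map_pow, aeval_X, Algebra.smul_def]
  have hw'pow : w' ^ p ^ m = 0 := by
    rw [hw', ← map_pow, hgpow, map_sum]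
    have : ∀ j ∈ Finset.range (n₀ - m + 1),
        aeval v (C (c (j + m)) * X ^ p ^ (j + m)) = c (j + m) • v ^ p ^ (j + m) := by
      intro j _
      rw [map_mul, aeval_C, map_pow, aeval_X, Algebra.smul_def]
    rw [Finset.sum_congr rfl this]
    -- split off the top term j = n₀ - m
    rw [Finset.sum_range_succ, Nat.sub_add_cancel hmn₀]
    have htop : c n₀ • v ^ p ^ n₀ = v ^ p ^ n₀ := by
      rw [hc]; simp
    rw [htop, add_comm]
    -- remaining sum equals the original lower sum
    have hlow : ∑ j ∈ Finset.range (n₀ - m), c (j + m) • v ^ p ^ (j + m)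
        = ∑ i ∈ Finset.range n₀, a i • v ^ p ^ i := by
      have h1 : ∑ j ∈ Finset.range (n₀ - m), c (j + m) • v ^ p ^ (j + m)
          = ∑ i ∈ Finset.Ico m n₀, c i • v ^ p ^ i := by
        rw [Finset.sum_Ico_eq_sum_range]
        refine Finset.sum_congr rfl fun j _ => by rw [add_comm m j]
      rw [h1]
      have h2 : ∑ i ∈ Finset.Ico m n₀, c i • v ^ p ^ i
          = ∑ i ∈ Finset.Ico m n₀, a i • v ^ p ^ i := by
        refine Finset.sum_congr rfl fun i hi => ?_
        obtain ⟨h3, h4⟩ := Finset.mem_Ico.mp hi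
        rw [hca i h4]
      rw [h2]
      rw [Finset.range_eq_Ico, ← Finset.sum_Ico_consecutive _ (Nat.zero_le m) hmn₀]
      have h5 : ∑ i ∈ Finset.Ico 0 m, a i • v ^ p ^ i = 0 := by
        refine Finset.sum_eq_zero fun i hi => ?_
        obtain ⟨_, h6⟩ := Finset.mem_Ico.mp hi
        have h7 : c i = 0 := hclt i h6
        rw [hca i (by omega)] at h7
        rw [h7, zero_smul]
      rw [h5, zero_add]
    rw [hlow, ha]
  -- w' ≠ 0, else we contradict minimality of n₀
  have hw'ne : w' ≠ 0 := by
    intro h0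
    have hbn₀ : b n₀ ≠ 0 := by
      intro hb0
      apply hcn₀
      rw [← hbpow n₀, hb0, zero_pow (pow_ne_zero m (Fact.out : p.Prime).ne_zero)]
    have hPsmall : P (n₀ - m) := by
      refine ⟨fun j => b (j + m) / b n₀, ?_⟩
      have h1 : aeval v g = ∑ j ∈ Finset.range (n₀ - m + 1), b (j + m) • v ^ p ^ j :=
        haeval _ _
      rw [hw', h1] at h0
      rw [Finset.sum_range_succ, Nat.sub_add_cancel hmn₀] at h0
      have h2 : v ^ p ^ (n₀ - m) + ∑ j ∈ Finset.range (n₀ - m), (b (j + m) / b n₀) • v ^ p ^ j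
          = (b n₀)⁻¹ • (∑ j ∈ Finset.range (n₀ - m), b (j + m) • v ^ p ^ j
            + b n₀ • v ^ p ^ (n₀ - m)) := by
        rw [smul_add, smul_smul, inv_mul_cancel₀ hbn₀, one_smul,
          Finset.smul_sum, add_comm]
        congr 1
        refine Finset.sum_congr rfl fun j _ => ?_
        rw [smul_smul, div_eq_inv_mul]
      rw [h2, h0, smul_zero]
    have : n₀ ≤ n₀ - m := Nat.find_le hPsmall
    omega
  -- extract w with w ^ p = 0
  have hjex : ∃ j, w' ^ p ^ j = 0 := ⟨m, hw'pow⟩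
  set j₀ := Nat.find hjex with hj₀
  have hj₀pos : 1 ≤ j₀ := by
    rcases Nat.eq_zero_or_pos j₀ with h | h
    · exfalso
      have := Nat.find_spec hjex
      rw [← hj₀, h, pow_zero, pow_one] at this
      exact hw'ne this
    · exact h
  refine ⟨w' ^ p ^ (j₀ - 1), ?_, ?_, ?_⟩
  · exact pow_mem hw'mem _
  · have := Nat.find_min hjex (show j₀ - 1 < j₀ by omega)
    exact this
  · rw [← pow_mul, ← pow_succ, Nat.sub_add_cancel hj₀pos]
    exact Nat.find_spec hjex
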